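/- Let W0 ∈ ℝ^{p×n} be the pretrained map, C_pres ∈ ℝ^{n×m} the preserved concept matrix, and U2 ∈ ℝ^{n×s} a matrix satisfying U2ᵀ C_pres = 0. Let c ∈ ℝ^n be a target concept with proxy c* ∈ ℝ^n, set x = U2ᵀ c and b = W0 (c* − c), and assume x ≠ 0. Define the double-projection update ΔW* = (1/‖x‖₂²) · (b xᵀ) U2ᵀ ∈ ℝ^{p×n}. Then (i) ΔW* C_pres = 0, so all columns of C_pres are exactly preserved by W0 + ΔW*, and (ii) (W0 + ΔW*) c = W0 c*, i.e., the target concept is exactly mapped to the proxy output. -/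

import Mathlib

open Matrix

/-- Euclidean (ℓ²) norm of a real vector. -/
noncomputable def vecEnorm {n : ℕ} (v : Fin n → ℝ) : ℝ :=
  ‖(WithLp.equiv 2 (Fin n → ℝ)).symm v‖

lemma enorm_sq {n : ℕ} (v : Fin n → ℝ) : vecEnorm v ^ 2 = v ⬝ᵥ v := by
  simp [vecEnorm, EuclideanSpace.norm_eq, dotProduct, Real.sq_sqrt, sq,
    Finset.sum_nonneg (fun i _ => mul_self_nonneg (v i))]

/-- **Double-projection update: exact preservation and exact erasure.**
With `U2ᵀ C_pres = 0`, `x = U2ᵀ c ≠ 0`, `b = W0 (c* − c)` and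
`ΔW* = (b xᵀ / ‖x‖₂²) U2ᵀ`, one has (i) `ΔW* C_pres = 0`, so every column
of `C_pres` is preserved exactly by `W0 + ΔW*`, and
(ii) `(W0 + ΔW*) c = W0 c*`. -/
theorem double_projection_preserves_and_erases
    {p n m s : ℕ}
    (W0 : Matrix (Fin p) (Fin n) ℝ)
    (Cpres : Matrix (Fin n) (Fin m) ℝ)
    (U2 : Matrix (Fin n) (Fin s) ℝ)
    (hU2 : U2ᵀ * Cpres = 0)
    (c cstar : Fin n → ℝ)
    (x : Fin s → ℝ) (hx : x = U2ᵀ.mulVec c) (hx0 : x ≠ 0)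
    (b : Fin p → ℝ) (hb : b = W0.mulVec (cstar - c))
    (ΔW : Matrix (Fin p) (Fin n) ℝ)
    (hΔW : ΔW = (vecEnorm x ^ 2)⁻¹ • (Matrix.vecMulVec b x * U2ᵀ)) :
    ΔW * Cpres = 0 ∧
    (∀ j : Fin m, (W0 + ΔW).mulVec (fun i => Cpres i j) = W0.mulVec (fun i => Cpres i j)) ∧
    (W0 + ΔW).mulVec c = W0.mulVec cstar := by
  have hxx : x ⬝ᵥ x ≠ 0 := by
    intro h
    exact hx0 (funext fun i => by
      have := (Finset.sum_eq_zero_iff_of_nonneg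
        (fun i _ => mul_self_nonneg (x i))).mp h i (Finset.mem_univ i)
      exact mul_self_eq_zero.mp this)
  have h1 : ΔW * Cpres = 0 := by
    rw [hΔW, Matrix.smul_mul, Matrix.mul_assoc, hU2, Matrix.mul_zero, smul_zero]
  refine ⟨h1, ?_, ?_⟩
  · intro j
    rw [Matrix.add_mulVec]
    have : ΔW.mulVec (fun i => Cpres i j) = 0 := by
      funext i
      have h2 := congrFun (congrFun h1 i) j
      simpa [Matrix.mul_apply, Matrix.mulVec, dotProduct] using h2
    simp [this]
  · rw [Matrix.add_mulVec, hΔW]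
    have hΔc : ((vecEnorm x ^ 2)⁻¹ • (Matrix.vecMulVec b x * U2ᵀ)).mulVec c
        = W0.mulVec (cstar - c) := by
      rw [Matrix.smul_mulVec, ← Matrix.mulVec_mulVec, ← hx]
      have : (Matrix.vecMulVec b x).mulVec x = (x ⬝ᵥ x) • b := by
        funext i
        simp only [Matrix.mulVec, Matrix.vecMulVec, dotProduct, Pi.smul_apply, smul_eq_mul,
          Matrix.of_apply, Finset.sum_mul]
        exact Finset.sum_congr rfl fun _ _ => by ring
      rw [this, enorm_sq, smul_smul, inv_mul_cancel₀ hxx, one_smul, hb]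
    rw [hΔc, Matrix.mulVec_sub]
    abel
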